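/- For every η > 0 there exists a unique R > 0 satisfying ψ*(ηR) = (η + 1)R. -/

import Mathlib

noncomputable def psi (p lam : ℝ) : ℝ :=
  1 - Real.logb 2 ((2 * p) ^ lam + (2 * (1 - p)) ^ lam)

noncomputable def psiStar (p β : ℝ) : ℝ :=
  sSup {y : ℝ | ∃ lam : ℝ, 0 < lam ∧ y = psi p lam - lam * β}

section aux
variable {p : ℝ} (hp0 : 0 < p) (hp : p < 1/2)

-- basic
lemma two_p_lt_one (hp : p < 1/2) : 2 * p < 1 := by linarith
lemma one_lt_two_pb (hp : p < 1/2) : 1 < 2 * (1 - p) := by linarith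

-- ψ(λ) ≤ 1 - λ * logb 2 (2(1-p)) ≤ 1 for λ > 0
lemma psi_le_one (hp0 : 0 < p) (hp : p < 1/2) {lam : ℝ} (hlam : 0 < lam) :
    psi p lam ≤ 1 := by
  have h1 : (1:ℝ) < 2 * (1 - p) := by linarith
  have hb : (0:ℝ) < (2 * (1 - p)) ^ lam := Real.rpow_pos_of_pos (by linarith) _
  have ha : (0:ℝ) ≤ (2 * p) ^ lam := (Real.rpow_pos_of_pos (by linarith) _).le
  have hlog : 0 ≤ Real.logb 2 ((2 * p) ^ lam + (2 * (1 - p)) ^ lam) := by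
    apply Real.logb_nonneg one_lt_two
    have : (1:ℝ) ≤ (2 * (1 - p)) ^ lam := Real.one_le_rpow h1.le hlam.le
    linarith
  simp only [psi]; linarith

lemma mem_psiSet {β lam : ℝ} (hlam : 0 < lam) :
    psi p lam - lam * β ∈ {y : ℝ | ∃ lam : ℝ, 0 < lam ∧ y = psi p lam - lam * β} :=
  ⟨lam, hlam, rfl⟩

lemma psiSet_nonempty (β : ℝ) :
    {y : ℝ | ∃ lam : ℝ, 0 < lam ∧ y = psi p lam - lam * β}.Nonempty :=
  ⟨psi p 1 - 1 * β, 1, one_pos, rfl⟩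

lemma psiSet_bddAbove (hp0 : 0 < p) (hp : p < 1/2) {β : ℝ} (hβ : 0 ≤ β) :
    BddAbove {y : ℝ | ∃ lam : ℝ, 0 < lam ∧ y = psi p lam - lam * β} := by
  refine ⟨1, fun y hy => ?_⟩
  obtain ⟨lam, hlam, rfl⟩ := hy
  have := psi_le_one hp0 hp hlam
  nlinarith [mul_nonneg hlam.le hβ]

lemma psiStar_le_one (hp0 : 0 < p) (hp : p < 1/2) {β : ℝ} (hβ : 0 ≤ β) :
    psiStar p β ≤ 1 := by
  refine csSup_le (psiSet_nonempty β) ?_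
  rintro y ⟨lam, hlam, rfl⟩
  have := psi_le_one hp0 hp hlam
  nlinarith [mul_nonneg hlam.le hβ]

lemma psiStar_ge (hp0 : 0 < p) (hp : p < 1/2) {β : ℝ} (hβ : 0 ≤ β) {lam : ℝ} (hlam : 0 < lam) :
    psi p lam - lam * β ≤ psiStar p β :=
  le_csSup (psiSet_bddAbove hp0 hp hβ) (mem_psiSet hlam)

lemma psi_half_pos (hp0 : 0 < p) (hp : p < 1/2) : 0 < psi p (1/2) := by
  have ha : (0:ℝ) < 2 * p := by linarith
  have hb : (0:ℝ) < 2 * (1 - p) := by linarith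
  have hsa : (2 * p) ^ ((1:ℝ)/2) = Real.sqrt (2 * p) := by
    rw [Real.sqrt_eq_rpow]
  have hsb : (2 * (1 - p)) ^ ((1:ℝ)/2) = Real.sqrt (2 * (1 - p)) := by
    rw [Real.sqrt_eq_rpow]
  have hkey : Real.sqrt (2 * p) + Real.sqrt (2 * (1 - p)) < 2 := by
    have h1 : Real.sqrt (2 * p) ^ 2 = 2 * p := Real.sq_sqrt ha.le
    have h2 : Real.sqrt (2 * (1 - p)) ^ 2 = 2 * (1 - p) := Real.sq_sqrt hb.le
    have h3 : Real.sqrt (2 * p) < Real.sqrt (2 * (1 - p)) :=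
      Real.sqrt_lt_sqrt ha.le (by linarith)
    nlinarith [Real.sqrt_nonneg (2 * p), Real.sqrt_nonneg (2 * (1 - p))]
  have hpos : 0 < Real.sqrt (2 * p) + Real.sqrt (2 * (1 - p)) := by
    have := Real.sqrt_pos.mpr hb
    have := Real.sqrt_nonneg (2 * p)
    linarith
  have : Real.logb 2 ((2 * p) ^ ((1:ℝ)/2) + (2 * (1 - p)) ^ ((1:ℝ)/2)) < 1 := by
    rw [hsa, hsb]
    calc Real.logb 2 (Real.sqrt (2 * p) + Real.sqrt (2 * (1 - p)))
        < Real.logb 2 2 := Real.logb_lt_logb one_lt_two hpos hkey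
      _ = 1 := Real.logb_self_eq_one (by norm_num : (1:ℝ) < 2)
  simp only [psi]
  linarith

lemma psiStar_anti (hp0 : 0 < p) (hp : p < 1/2) {β β' : ℝ} (hβ : 0 ≤ β) (h : β ≤ β') :
    psiStar p β' ≤ psiStar p β := by
  refine csSup_le (psiSet_nonempty β') ?_
  rintro y ⟨lam, hlam, rfl⟩
  calc psi p lam - lam * β' ≤ psi p lam - lam * β := by nlinarith
    _ ≤ psiStar p β := psiStar_ge hp0 hp hβ hlam

lemma psiStar_convex (hp0 : 0 < p) (hp : p < 1/2) :
    ConvexOn ℝ (Set.Ici 0) (psiStar p) := by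
  refine ⟨convex_Ici 0, fun β₁ h₁ β₂ h₂ a b ha hb hab => ?_⟩
  simp only [Set.mem_Ici] at h₁ h₂
  refine csSup_le (psiSet_nonempty _) ?_
  rintro y ⟨lam, hlam, rfl⟩
  have e1 : psi p lam - lam * β₁ ≤ psiStar p β₁ := psiStar_ge hp0 hp h₁ hlam
  have e2 : psi p lam - lam * β₂ ≤ psiStar p β₂ := psiStar_ge hp0 hp h₂ hlam
  have := mul_le_mul_of_nonneg_left e1 ha
  have := mul_le_mul_of_nonneg_left e2 hb
  simp only [smul_eq_mul]
  have hb1 : a = 1 - b := by linarith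
  subst hb1
  nlinarith

end aux

theorem stmt_7 (p : ℝ) (hp0 : 0 < p) (hp : p < 1 / 2) (η : ℝ) (hη : 0 < η) :
    ∃! R : ℝ, 0 < R ∧ psiStar p (η * R) = (η + 1) * R := by
  set g : ℝ → ℝ := fun R => psiStar p (η * R) - (η + 1) * R with hg
  set c₀ : ℝ := psi p (1/2) with hc₀
  have hc₀pos : 0 < c₀ := psi_half_pos hp0 hp
  set K : ℝ := η / 2 + η + 1 with hK
  have hKpos : 0 < K := by positivity
  set a : ℝ := c₀ / (2 * K) with ha
  have hapos : 0 < a := by positivity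
  set b : ℝ := a + 1 / (η + 1) + 1 with hb
  clear_value c₀ K a b
  have hab : a ≤ b := by
    have : 0 < 1 / (η + 1) := by positivity
    linarith
  -- g a > 0
  have hga : 0 < g a := by
    have h1 : psi p (1/2) - (1/2) * (η * a) ≤ psiStar p (η * a) :=
      psiStar_ge hp0 hp (mul_nonneg hη.le hapos.le) (by norm_num)
    have h2 : a * K = c₀ / 2 := by
      field_simp [ha, hKpos.ne']
      rw [ha, div_mul_eq_mul_div, div_mul_eq_mul_div, div_eq_iff (by positivity)]; ring
    simp only [hg]
    nlinarith
  -- g b < 0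
  have hgb : g b < 0 := by
    have hbpos : 0 < b := lt_of_lt_of_le hapos hab
    have h1 : psiStar p (η * b) ≤ 1 := psiStar_le_one hp0 hp (mul_nonneg hη.le hbpos.le)
    have h2 : 1 < (η + 1) * b := by
      have : (η + 1) * (1 / (η + 1)) = 1 := by field_simp
      nlinarith
    simp only [hg]
    linarith
  -- continuity of g on Icc a b
  have hcont : ContinuousOn g (Set.Icc a b) := by
    have hconv := psiStar_convex hp0 hp
    have hc1 : ContinuousOn (psiStar p) (Set.Ioi 0) := by
      have := hconv.continuousOn_interior
      rwa [interior_Ici] at this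
    have hmaps : Set.MapsTo (fun R => η * R) (Set.Icc a b) (Set.Ioi 0) := by
      intro x hx
      have := hx.1
      simp only [Set.mem_Ioi]
      nlinarith
    have : ContinuousOn (fun R => psiStar p (η * R)) (Set.Icc a b) :=
      hc1.comp ((continuous_const.mul continuous_id).continuousOn) hmaps
    exact this.sub ((continuous_const.mul continuous_id).continuousOn)
  -- IVT
  have h0mem : (0:ℝ) ∈ Set.Icc (g b) (g a) := ⟨hgb.le, hga.le⟩
  obtain ⟨R, hRmem, hR0⟩ := intermediate_value_Icc' hab hcont h0mem
  have hRpos : 0 < R := lt_of_lt_of_le hapos hRmem.1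
  have hReq : psiStar p (η * R) = (η + 1) * R := by
    have : psiStar p (η * R) - (η + 1) * R = 0 := hR0
    linarith
  -- uniqueness
  have huniq : ∀ R₁ R₂ : ℝ, (0 < R₁ ∧ psiStar p (η * R₁) = (η + 1) * R₁) →
      (0 < R₂ ∧ psiStar p (η * R₂) = (η + 1) * R₂) → R₁ ≤ R₂ := by
    rintro R₁ R₂ ⟨h₁, e₁⟩ ⟨h₂, e₂⟩
    by_contra hlt
    push_neg at hlt
    have hmono : psiStar p (η * R₁) ≤ psiStar p (η * R₂) :=
      psiStar_anti hp0 hp (mul_nonneg hη.le h₂.le) (by nlinarith)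
    rw [e₁, e₂] at hmono
    nlinarith
  refine ⟨R, ⟨hRpos, hReq⟩, fun R' hR' => ?_⟩
  exact le_antisymm (huniq R' R hR' ⟨hRpos, hReq⟩) (huniq R R' ⟨hRpos, hReq⟩ hR')
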